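/- Let V be a finite-dimensional complex vector space, A, B alternating bilinear forms on V, and let rk 𝓛 := max_{λ ∈ ℂ ∪ {∞}} rank(A + λB) with rank at λ = ∞ meaning rank B. Let K ⊆ V be the core subspace, i.e., the span of the union of the kernels Ker(A + λB) := {v : (A+λB)(v, w) = 0 ∀w ∈ V} over all regular λ ∈ ℂ ∪ {∞} (those with rank(A + λB) = rk 𝓛). Let U ⊆ V be a bi-isotropic admissible subspace with common orthogonal W such that K ⊆ U. Then for every regular λ ∈ ℂ ∪ {∞}, the radical of the restriction of A + λB to W equals U; that is, {w ∈ W : (A + λB)(w, w') = 0 for all w' ∈ W} = U. In particular, the pencil induced on W/U is nondegenerate at every regular λ. -/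

import Mathlib

open Module LinearMap

variable {V : Type*} [AddCommGroup V] [Module ℂ V]

/-- The skew-orthogonal complement of a subspace `U` with respect to a
bilinear form `C`. -/
noncomputable def orthComp (C : V →ₗ[ℂ] V →ₗ[ℂ] ℂ) (U : Submodule ℂ V) : Submodule ℂ V :=
  ⨅ u ∈ U, LinearMap.ker (C u)

/-- The rank of a bilinear form: the rank of the induced map `V → V*`. -/
noncomputable def formRank (C : V →ₗ[ℂ] V →ₗ[ℂ] ℂ) : ℕ :=
  Module.finrank ℂ (LinearMap.range C)

/-- The member of the pencil `{A + λB : λ ∈ ℂ ∪ {∞}}` at `λ`; `none` is `λ = ∞`,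
where the form is `B`. -/
noncomputable def pencilForm (A B : V →ₗ[ℂ] V →ₗ[ℂ] ℂ) : Option ℂ → V →ₗ[ℂ] V →ₗ[ℂ] ℂ
  | none => B
  | some l => A + l • B

/-- The rank of the pencil: `max_{λ ∈ ℂ ∪ {∞}} rank (A + λB)`. -/
noncomputable def pencilRank (A B : V →ₗ[ℂ] V →ₗ[ℂ] ℂ) : ℕ :=
  ⨆ l : Option ℂ, formRank (pencilForm A B l)

/-- The core subspace: the span of the union of kernels `Ker (A + λB)` over
all regular `λ ∈ ℂ ∪ {∞}` (those with `rank (A + λB) = rk 𝓛`). Note that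
`Ker (A + λB) = {v : (A + λB)(v, w) = 0 ∀ w}` is the kernel of the induced map
`V → V*`. -/
noncomputable def coreSubspace (A B : V →ₗ[ℂ] V →ₗ[ℂ] ℂ) : Submodule ℂ V :=
  ⨆ l ∈ {l : Option ℂ | formRank (pencilForm A B l) = pencilRank A B},
    LinearMap.ker (pencilForm A B l)

/-! ### Auxiliary lemmas -/

lemma exists_det_ne_zero [FiniteDimensional ℂ V] {k : ℕ} (φ : Fin k → Module.Dual ℂ V)
    (hφ : LinearIndependent ℂ φ) :
    ∃ w : Fin k → V, (Matrix.of fun i j => φ i (w j)).det ≠ 0 := by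
  set T : V →ₗ[ℂ] (Fin k → ℂ) := LinearMap.pi φ with hT
  have hsurj : Function.Surjective T := by
    rw [← LinearMap.range_eq_top]
    by_contra h
    obtain ⟨g, hg0, hg⟩ := (LinearMap.range T).exists_dual_map_eq_bot_of_lt_top
      (lt_top_iff_ne_top.2 h) inferInstance
    have hgv : ∀ v, g (T v) = 0 := by
      intro v
      have : g (T v) ∈ (LinearMap.range T).map g := ⟨T v, ⟨v, rfl⟩, rfl⟩
      rwa [hg, Submodule.mem_bot] at this
    set c : Fin k → ℂ := fun i => g (fun j => if i = j then 1 else 0) with hc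
    have hgx : ∀ x : Fin k → ℂ, g x = ∑ i, x i * c i := by
      intro x
      conv_lhs => rw [pi_eq_sum_univ x]
      rw [map_sum]
      refine Finset.sum_congr rfl fun i _ => ?_
      rw [map_smul, smul_eq_mul]
    have hcoef : ∀ i, c i = 0 := by
      have hzero : ∀ v, ∑ i, c i • φ i v = 0 := by
        intro v
        have := hgv v
        rw [hgx] at this
        simpa [hT, smul_eq_mul, mul_comm] using this
      have : ∑ i, c i • φ i = 0 := by
        ext v; simpa using hzero v
      exact Fintype.linearIndependent_iff.mp hφ c this
    apply hg0
    refine LinearMap.ext fun x => ?_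
    rw [hgx]
    simp [hcoef]
  choose w hw using fun j => hsurj (fun i => if i = j then 1 else 0)
  refine ⟨w, ?_⟩
  have : (Matrix.of fun i j => φ i (w j)) = (1 : Matrix (Fin k) (Fin k) ℂ) := by
    ext i j
    have := congrFun (hw j) i
    simp only [hT, LinearMap.pi_apply] at this
    simp [Matrix.of_apply, this, Matrix.one_apply, eq_comm]
  rw [this, Matrix.det_one]
  exact one_ne_zero

lemma rank_ge_of_det [FiniteDimensional ℂ V] {k : ℕ} (C : V →ₗ[ℂ] V →ₗ[ℂ] ℂ)
    (v w : Fin k → V) (h : (Matrix.of fun i j => C (v i) (w j)).det ≠ 0) :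
    k ≤ formRank C := by
  have hind : LinearIndependent ℂ (fun i => C (v i)) := by
    rw [Fintype.linearIndependent_iff]
    intro c hc
    have hvm : Matrix.vecMul c (Matrix.of fun i j => C (v i) (w j)) = 0 := by
      funext j
      have h2 := congrArg (fun f : Module.Dual ℂ V => f (w j)) hc
      simpa [Matrix.vecMul, dotProduct, smul_eq_mul] using h2
    have := Matrix.eq_zero_of_vecMul_eq_zero h hvm
    exact fun i => congrFun this i
  have hind' : LinearIndependent ℂ
      (fun i => (⟨C (v i), LinearMap.mem_range_self C (v i)⟩ : LinearMap.range C)) := by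
    apply LinearIndependent.of_comp (LinearMap.range C).subtype
    exact hind
  simpa [formRank] using hind'.fintype_card_le_finrank

lemma finite_bad [FiniteDimensional ℂ V] (M N : V →ₗ[ℂ] V →ₗ[ℂ] ℂ) :
    {l : ℂ | formRank (M + l • N) < formRank M}.Finite := by
  set k := formRank M with hk
  obtain ⟨v, hv⟩ : ∃ v : Fin k → V, LinearIndependent ℂ (fun i => M (v i)) := by
    let b := Module.finBasis ℂ (LinearMap.range M)
    have hb : ∀ i, ∃ x, M x = (b i : Module.Dual ℂ V) := fun i =>
      LinearMap.mem_range.mp (b i).2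
    choose v hvv using hb
    refine ⟨fun i => v (Fin.cast rfl i), ?_⟩
    have : (fun i => M (v i)) = (LinearMap.range M).subtype ∘ b := by
      funext i; simp [hvv]
    have hind : LinearIndependent ℂ (fun i => M (v i)) := by
      rw [this]
      exact b.linearIndependent.map' _ (Submodule.ker_subtype _)
    exact hind
  obtain ⟨w, hw⟩ := exists_det_ne_zero (fun i => M (v i)) hv
  set p : Polynomial ℂ :=
    Matrix.det (Matrix.of fun i j => Polynomial.C (M (v i) (w j))
      + Polynomial.X * Polynomial.C (N (v i) (w j))) with hp
  have heval : ∀ l : ℂ, p.eval l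
      = (Matrix.of fun i j => (M + l • N) (v i) (w j)).det := by
    intro l
    rw [hp, ← Polynomial.coe_evalRingHom, RingHom.map_det]
    congr 1
    ext i j
    simp only [RingHom.mapMatrix_apply, Matrix.map_apply, Matrix.of_apply,
      Polynomial.coe_evalRingHom,
      Polynomial.eval_add, Polynomial.eval_mul, Polynomial.eval_C, Polynomial.eval_X,
      LinearMap.add_apply, LinearMap.smul_apply, smul_eq_mul]
  have hp0 : p ≠ 0 := by
    intro h0
    have := heval 0
    rw [h0] at this
    simp only [Polynomial.eval_zero] at this
    apply hw
    rw [this]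
    congr 1
    ext i j
    simp
  refine Set.Finite.subset (Polynomial.finite_setOf_isRoot hp0) ?_
  intro l hl
  simp only [Set.mem_setOf_eq] at hl ⊢
  by_contra hroot
  have : p.eval l ≠ 0 := hroot
  rw [heval l] at this
  exact absurd (rank_ge_of_det _ v w this) (not_le.mpr hl)

lemma finite_bad_at [FiniteDimensional ℂ V] (A B : V →ₗ[ℂ] V →ₗ[ℂ] ℂ) (l₀ : ℂ) :
    {l : ℂ | formRank (A + l • B) < formRank (A + l₀ • B)}.Finite := by
  have h := (finite_bad (A + l₀ • B) B).image (fun μ => μ + l₀)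
  refine h.subset ?_
  intro l hl
  refine ⟨l - l₀, ?_, by ring⟩
  simp only [Set.mem_setOf_eq]
  have : A + l₀ • B + (l - l₀) • B = A + l • B := by
    rw [add_assoc, ← add_smul]; ring_nf
  rw [this]
  exact hl

lemma finite_bad_inf [FiniteDimensional ℂ V] (A B : V →ₗ[ℂ] V →ₗ[ℂ] ℂ) :
    {l : ℂ | formRank (A + l • B) < formRank B}.Finite := by
  have h := ((finite_bad B A).image (fun μ => μ⁻¹)).union (Set.finite_singleton 0)
  refine h.subset ?_
  intro l hl
  simp only [Set.mem_setOf_eq] at hl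
  rcases eq_or_ne l 0 with h0 | h0
  · exact Or.inr h0
  · refine Or.inl ⟨l⁻¹, ?_, inv_inv l⟩
    simp only [Set.mem_setOf_eq]
    have hrank : formRank (B + l⁻¹ • A) = formRank (A + l • B) := by
      have : B + l⁻¹ • A = l⁻¹ • (A + l • B) := by
        rw [smul_add, smul_smul, inv_mul_cancel₀ h0, one_smul, add_comm]
      rw [this]
      unfold formRank
      rw [LinearMap.range_smul _ _ (inv_ne_zero h0)]
    rw [hrank]
    exact hl

lemma formRank_le [FiniteDimensional ℂ V] (C : V →ₗ[ℂ] V →ₗ[ℂ] ℂ) :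
    formRank C ≤ finrank ℂ (Module.Dual ℂ V) :=
  Submodule.finrank_le _

lemma le_pencilRank [FiniteDimensional ℂ V] (A B : V →ₗ[ℂ] V →ₗ[ℂ] ℂ) (l : Option ℂ) :
    formRank (pencilForm A B l) ≤ pencilRank A B :=
  le_ciSup (f := fun l : Option ℂ => formRank (pencilForm A B l))
    ⟨finrank ℂ (Module.Dual ℂ V), by rintro x ⟨l, rfl⟩; exact formRank_le _⟩ l

lemma exists_regular [FiniteDimensional ℂ V] (A B : V →ₗ[ℂ] V →ₗ[ℂ] ℂ) :
    ∃ l, formRank (pencilForm A B l) = pencilRank A B := by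
  have hbdd : BddAbove (Set.range fun l : Option ℂ => formRank (pencilForm A B l)) :=
    ⟨finrank ℂ (Module.Dual ℂ V), by rintro x ⟨l, rfl⟩; exact formRank_le _⟩
  have := Nat.sSup_mem (Set.range_nonempty _) hbdd
  obtain ⟨l, hl⟩ := this
  exact ⟨l, hl⟩

lemma finite_irregular [FiniteDimensional ℂ V] (A B : V →ₗ[ℂ] V →ₗ[ℂ] ℂ) :
    {l : ℂ | formRank (A + l • B) ≠ pencilRank A B}.Finite := by
  obtain ⟨l₀, hl₀⟩ := exists_regular A B
  have key : {l : ℂ | formRank (A + l • B) < pencilRank A B}.Finite := by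
    cases l₀ with
    | none =>
      have : formRank B = pencilRank A B := hl₀
      simpa [this] using finite_bad_inf A B
    | some μ =>
      have : formRank (A + μ • B) = pencilRank A B := hl₀
      simpa [this] using finite_bad_at A B μ
  refine key.subset ?_
  intro l hl
  simp only [Set.mem_setOf_eq] at hl ⊢
  exact lt_of_le_of_ne (le_pencilRank A B (some l)) hl

lemma mem_orthComp {C : V →ₗ[ℂ] V →ₗ[ℂ] ℂ} {S : Submodule ℂ V} {v : V} :
    v ∈ orthComp C S ↔ ∀ u ∈ S, C u v = 0 := by
  simp [orthComp, Submodule.mem_iInf, LinearMap.mem_ker]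

lemma orthComp_eq_dualCoannihilator (C : V →ₗ[ℂ] V →ₗ[ℂ] ℂ) (S : Submodule ℂ V) :
    orthComp C S = (S.map C).dualCoannihilator := by
  ext v
  rw [mem_orthComp, Submodule.mem_dualCoannihilator]
  constructor
  · rintro h φ ⟨u, hu, rfl⟩; exact h u hu
  · intro h u hu; exact h (C u) ⟨u, hu, rfl⟩

lemma finrank_orthComp [FiniteDimensional ℂ V] (C : V →ₗ[ℂ] V →ₗ[ℂ] ℂ) (S : Submodule ℂ V) :
    finrank ℂ (orthComp C S) + finrank ℂ (S.map C) = finrank ℂ V := by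
  rw [orthComp_eq_dualCoannihilator, add_comm]
  exact Subspace.finrank_add_finrank_dualCoannihilator_eq _

lemma finrank_map_add [FiniteDimensional ℂ V] (C : V →ₗ[ℂ] V →ₗ[ℂ] ℂ) (S : Submodule ℂ V) :
    finrank ℂ (S.map C) + finrank ℂ ((S ⊓ LinearMap.ker C : Submodule ℂ V)) = finrank ℂ S := by
  have h := LinearMap.finrank_range_add_finrank_ker (C.domRestrict S)
  rw [LinearMap.range_domRestrict] at h
  have hker : LinearMap.ker (C.domRestrict S) = (S ⊓ LinearMap.ker C).comap S.subtype := by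
    ext x
    simp [LinearMap.mem_ker, LinearMap.domRestrict_apply, x.2]
  rw [hker] at h
  have : finrank ℂ ((S ⊓ LinearMap.ker C).comap S.subtype)
      = finrank ℂ ((S ⊓ LinearMap.ker C : Submodule ℂ V)) :=
    LinearEquiv.finrank_eq (Submodule.comapSubtypeEquivOfLe inf_le_left)
  rw [this] at h
  exact h

/-- Let `U` be a bi-isotropic admissible subspace with common
orthogonal `W` containing the core subspace `K ⊆ U`. Then for every regular
`λ ∈ ℂ ∪ {∞}`, the radical of the restriction of `A + λB` to `W` equals `U`;
in particular, any form induced on `W/U` by a regular member of the pencil is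
nondegenerate. -/
theorem statement_8 [FiniteDimensional ℂ V]
    (A B : V →ₗ[ℂ] V →ₗ[ℂ] ℂ) (hAalt : A.IsAlt) (hBalt : B.IsAlt)
    (U W : Submodule ℂ V)
    (hbiiso : ∀ u ∈ U, ∀ v ∈ U, A u v = 0 ∧ B u v = 0)
    (hadm : {l : ℂ | orthComp (A + l • B) U ≠ W}.Finite)
    (hcore : coreSubspace A B ≤ U) :
    (∀ l : Option ℂ, formRank (pencilForm A B l) = pencilRank A B →
      {w : V | w ∈ W ∧ ∀ w' ∈ W, pencilForm A B l w w' = 0} = (U : Set V)) ∧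
    (∀ l : Option ℂ, formRank (pencilForm A B l) = pencilRank A B →
      ∀ C' : (W ⧸ U.comap W.subtype) →ₗ[ℂ] (W ⧸ U.comap W.subtype) →ₗ[ℂ] ℂ,
        (∀ x y : W, C' (Submodule.Quotient.mk x) (Submodule.Quotient.mk y)
          = pencilForm A B l (x : V) (y : V)) →
        ∀ q : W ⧸ U.comap W.subtype, (∀ q', C' q q' = 0) → q = 0) := by
  classical
  have hGinf : {l : ℂ | orthComp (A + l • B) U = W}.Infinite := by
    have h := hadm.infinite_compl
    have heq : {l : ℂ | orthComp (A + l • B) U ≠ W}ᶜ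
        = {l : ℂ | orthComp (A + l • B) U = W} := by
      ext l; simp [Set.mem_compl_iff]
    rwa [heq] at h
  -- Step 1: U is orthogonal to W for both A and B
  have hUW : ∀ u ∈ U, ∀ v ∈ W, A u v = 0 ∧ B u v = 0 := by
    obtain ⟨l₁, hl₁, l₂, hl₂, hne⟩ := hGinf.nontrivial
    simp only [Set.mem_setOf_eq] at hl₁ hl₂
    intro u hu v hv
    have h1 : A u v + l₁ * B u v = 0 := by
      have hv1 : v ∈ orthComp (A + l₁ • B) U := by rw [hl₁]; exact hv
      have := mem_orthComp.mp hv1 u hu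
      simpa using this
    have h2 : A u v + l₂ * B u v = 0 := by
      have hv2 : v ∈ orthComp (A + l₂ • B) U := by rw [hl₂]; exact hv
      have := mem_orthComp.mp hv2 u hu
      simpa using this
    have hB : B u v = 0 := by
      have h3 : (l₁ - l₂) * B u v = 0 := by linear_combination h1 - h2
      rcases mul_eq_zero.mp h3 with h | h
      · exact absurd (sub_eq_zero.mp h) hne
      · exact h
    refine ⟨?_, hB⟩
    have := h1
    rw [hB, mul_zero, add_zero] at this
    exact this
  have hC : ∀ l : Option ℂ, ∀ u ∈ U, ∀ v ∈ W, pencilForm A B l u v = 0 := by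
    intro l u hu v hv
    cases l with
    | none => exact (hUW u hu v hv).2
    | some μ =>
      simp only [pencilForm, LinearMap.add_apply, LinearMap.smul_apply, smul_eq_mul]
      rw [(hUW u hu v hv).1, (hUW u hu v hv).2, mul_zero, add_zero]
  -- Step 2: U ≤ W
  have hU_le_W : U ≤ W := by
    obtain ⟨l₁, hl₁⟩ := hGinf.nonempty
    simp only [Set.mem_setOf_eq] at hl₁
    intro u hu
    rw [← hl₁, mem_orthComp]
    intro u' hu'
    simp only [LinearMap.add_apply, LinearMap.smul_apply, smul_eq_mul]
    rw [(hbiiso u' hu' u hu).1, (hbiiso u' hu' u hu).2, mul_zero, add_zero]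
  -- alternation / skew-symmetry of the pencil
  have haltP : ∀ l : Option ℂ, (pencilForm A B l).IsAlt := by
    intro l
    cases l with
    | none => exact hBalt
    | some μ =>
      intro x
      simp only [pencilForm, LinearMap.add_apply, LinearMap.smul_apply, smul_eq_mul]
      rw [hAalt x, hBalt x, mul_zero, add_zero]
  have hskew : ∀ l : Option ℂ, ∀ x y : V,
      pencilForm A B l y x = -(pencilForm A B l x y) := fun l x y =>
    ((haltP l).neg x y).symm
  -- kernels of regular members lie in U
  have hker_le_U : ∀ l : Option ℂ, formRank (pencilForm A B l) = pencilRank A B →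
      LinearMap.ker (pencilForm A B l) ≤ U := by
    intro l hl
    refine le_trans ?_ hcore
    exact le_iSup₂ (f := fun l (_ : l ∈ {l : Option ℂ |
      formRank (pencilForm A B l) = pencilRank A B}) => LinearMap.ker (pencilForm A B l)) l hl
  -- the key computation
  have key : ∀ l : Option ℂ, formRank (pencilForm A B l) = pencilRank A B →
      orthComp (pencilForm A B l) W = U := by
    intro l hl
    obtain ⟨μ, hμW, hμr⟩ : ∃ μ : ℂ, orthComp (A + μ • B) U = W
        ∧ formRank (A + μ • B) = pencilRank A B := by
      have hfin := hadm.union (finite_irregular A B)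
      obtain ⟨μ, hμ⟩ := hfin.infinite_compl.nonempty
      simp only [Set.compl_union, Set.mem_inter_iff, Set.mem_compl_iff,
        Set.mem_setOf_eq, not_not] at hμ
      exact ⟨μ, hμ.1, hμ.2⟩
    have hμr' : formRank (pencilForm A B (some μ)) = pencilRank A B := hμr
    have hkerl_le : LinearMap.ker (pencilForm A B l) ≤ U := hker_le_U l hl
    have hkerμ_le : LinearMap.ker (A + μ • B) ≤ U := hker_le_U (some μ) hμr'
    have hknl := LinearMap.finrank_range_add_finrank_ker (pencilForm A B l)
    have hknμ := LinearMap.finrank_range_add_finrank_ker (A + μ • B)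
    have e1 := finrank_orthComp (A + μ • B) U
    have e2 := finrank_map_add (A + μ • B) U
    have e3 := finrank_orthComp (pencilForm A B l) W
    have e4 := finrank_map_add (pencilForm A B l) W
    have hiμ : U ⊓ LinearMap.ker (A + μ • B) = LinearMap.ker (A + μ • B) :=
      inf_eq_right.mpr hkerμ_le
    have hil : W ⊓ LinearMap.ker (pencilForm A B l) = LinearMap.ker (pencilForm A B l) :=
      inf_eq_right.mpr (hkerl_le.trans hU_le_W)
    rw [hiμ] at e2
    rw [hil] at e4
    rw [hμW] at e1
    have hrl : finrank ℂ (LinearMap.range (pencilForm A B l)) = pencilRank A B := hl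
    have hrμ : finrank ℂ (LinearMap.range (A + μ • B)) = pencilRank A B := hμr
    have hle : finrank ℂ (orthComp (pencilForm A B l) W) ≤ finrank ℂ U := by
      omega
    have hU_le : U ≤ orthComp (pencilForm A B l) W := by
      intro u hu
      rw [mem_orthComp]
      intro w hw
      rw [hskew l u w, hC l u hu w hw, neg_zero]
    exact (Submodule.eq_of_le_of_finrank_le hU_le hle).symm
  -- first conclusion
  have part1 : ∀ l : Option ℂ, formRank (pencilForm A B l) = pencilRank A B →
      {w : V | w ∈ W ∧ ∀ w' ∈ W, pencilForm A B l w w' = 0} = (U : Set V) := by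
    intro l hl
    ext x
    simp only [Set.mem_setOf_eq, SetLike.mem_coe]
    constructor
    · rintro ⟨hxW, hx⟩
      have hmem : x ∈ orthComp (pencilForm A B l) W := by
        rw [mem_orthComp]
        intro w hw
        rw [hskew l x w, hx w hw, neg_zero]
      rwa [key l hl] at hmem
    · intro hxU
      exact ⟨hU_le_W hxU, fun w' hw' => hC l x hxU w' hw'⟩
  refine ⟨part1, ?_⟩
  intro l hl C' hC' q hq
  obtain ⟨x, rfl⟩ := Submodule.Quotient.mk_surjective _ q
  rw [Submodule.Quotient.mk_eq_zero]
  have hx : (x : V) ∈ {w : V | w ∈ W ∧ ∀ w' ∈ W, pencilForm A B l w w' = 0} := by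
    refine ⟨x.2, fun w' hw' => ?_⟩
    have h := hq (Submodule.Quotient.mk ⟨w', hw'⟩)
    rw [hC' x ⟨w', hw'⟩] at h
    exact h
  rw [part1 l hl] at hx
  exact hx
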